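/- For every integer N ≥ 0, the set 3^{−N}·A, where A = ⋃_{k∈ℤ} (2k, 2k+1), is a measurable subset of ℝ with upper density 1/2 that avoids all the distances 3^{−j} for j = 0, 1, …, N. Consequently, m_{{3^{−j} : 0 ≤ j ≤ N}}(ℝ) ≥ 1/2 for every N. -/

import Mathlib

open MeasureTheory Filter Set
open scoped ENNReal

lemma img_mul_Ioo (c a b : ℝ) (hc : 0 < c) :
    (fun x : ℝ => c * x) '' Set.Ioo a b = Set.Ioo (c * a) (c * b) := by
  ext x
  constructor
  · rintro ⟨y, ⟨h1, h2⟩, rfl⟩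
    exact ⟨by simpa using (mul_lt_mul_iff_right₀ hc).2 h1, by simpa using (mul_lt_mul_iff_right₀ hc).2 h2⟩
  · rintro ⟨h1, h2⟩
    exact ⟨x / c, ⟨by rw [lt_div_iff₀ hc]; nlinarith, by rw [div_lt_iff₀ hc]; nlinarith⟩,
      by field_simp⟩

lemma scaled_eq (c : ℝ) (hc : 0 < c) :
    ((fun x : ℝ => c * x) '' (⋃ k : ℤ, Set.Ioo (2 * (k : ℝ)) (2 * (k : ℝ) + 1))) =
      ⋃ k : ℤ, Set.Ioo (c * (2 * k)) (c * (2 * k + 1)) := by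
  rw [Set.image_iUnion]
  exact Set.iUnion_congr fun k => img_mul_Ioo c _ _ hc

lemma vol_bounds (c : ℝ) (hc : 0 < c) (T : ℝ) (hT : 0 < T) :
    ENNReal.ofReal (T - 2*c) ≤
      volume ((⋃ k : ℤ, Set.Ioo (c * (2 * k)) (c * (2 * k + 1))) ∩ Set.Icc (-T) T) ∧
    volume ((⋃ k : ℤ, Set.Ioo (c * (2 * k)) (c * (2 * k + 1))) ∩ Set.Icc (-T) T) ≤
      ENNReal.ofReal (T + 2*c) := by
  have h30 : (0:ℝ) < 2 * c := by linarith
  set n : ℕ := ⌊T / (2*c)⌋₊ with hn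
  have hn1 : 2 * (n:ℝ) * c ≤ T := by
    have := Nat.floor_le (le_of_lt (div_pos hT h30))
    rw [← hn] at this
    have := (le_div_iff₀ h30).1 this
    linarith
  have hn2 : T < 2 * ((n:ℝ) + 1) * c := by
    have := Nat.lt_floor_add_one (T / (2*c))
    rw [← hn] at this
    have := (div_lt_iff₀ h30).1 this
    linarith
  have hvol : ∀ k : ℤ, volume (Set.Ioo (c*(2*k)) (c*(2*k+1))) = ENNReal.ofReal c := by
    intro k; rw [Real.volume_Ioo]; congr 1; ring
  have hdisj : ∀ (s : Finset ℤ), Set.PairwiseDisjoint (↑s)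
      (fun k : ℤ => Set.Ioo (c*(2*(k:ℝ))) (c*(2*(k:ℝ)+1))) := by
    intro s k _ l _ hkl
    refine Set.Ioo_disjoint_Ioo.2 ?_
    rcases hkl.lt_or_gt with h | h
    · have h' : (2*(k:ℝ)+1) ≤ 2*(l:ℝ) := by
        have : (2*k+1 : ℤ) ≤ 2*l := by omega
        exact_mod_cast this
      calc min (c*(2*(k:ℝ)+1)) (c*(2*(l:ℝ)+1)) ≤ c*(2*(k:ℝ)+1) := min_le_left _ _
        _ ≤ c*(2*(l:ℝ)) := by nlinarith
        _ ≤ max (c*(2*(k:ℝ))) (c*(2*(l:ℝ))) := le_max_right _ _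
    · have h' : (2*(l:ℝ)+1) ≤ 2*(k:ℝ) := by
        have : (2*l+1 : ℤ) ≤ 2*k := by omega
        exact_mod_cast this
      calc min (c*(2*(k:ℝ)+1)) (c*(2*(l:ℝ)+1)) ≤ c*(2*(l:ℝ)+1) := min_le_right _ _
        _ ≤ c*(2*(k:ℝ)) := by nlinarith
        _ ≤ max (c*(2*(k:ℝ))) (c*(2*(l:ℝ))) := le_max_left _ _
  have hsum : ∀ (a b : ℤ), (∑ k ∈ Finset.Icc a b, volume (Set.Ioo (c*(2*(k:ℝ))) (c*(2*(k:ℝ)+1))))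
      = (b + 1 - a).toNat * ENNReal.ofReal c := by
    intro a b
    simp only [hvol]
    rw [Finset.sum_const, Int.card_Icc, nsmul_eq_mul]
  constructor
  · -- lower bound
    calc ENNReal.ofReal (T - 2*c) ≤ ENNReal.ofReal (2*(n:ℝ)*c) :=
          ENNReal.ofReal_le_ofReal (by linarith)
      _ = ((n:ℤ) - 1 + 1 - -(n:ℤ)).toNat * ENNReal.ofReal c := by
          have : ((n:ℤ) - 1 + 1 - -(n:ℤ)).toNat = 2*n := by omega
          rw [this]
          rw [← ENNReal.ofReal_natCast (2*n), ← ENNReal.ofReal_mul (by positivity)]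
          congr 1; push_cast; ring
      _ = ∑ k ∈ Finset.Icc (-(n:ℤ)) ((n:ℤ)-1),
            volume (Set.Ioo (c*(2*(k:ℝ))) (c*(2*(k:ℝ)+1))) := (hsum _ _).symm
      _ = volume (⋃ k ∈ Finset.Icc (-(n:ℤ)) ((n:ℤ)-1),
            Set.Ioo (c*(2*(k:ℝ))) (c*(2*(k:ℝ)+1))) :=
          (measure_biUnion_finset (hdisj _) (fun k _ => measurableSet_Ioo)).symm
      _ ≤ volume ((⋃ k : ℤ, Set.Ioo (c * (2 * k)) (c * (2 * k + 1))) ∩ Set.Icc (-T) T) := by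
          apply measure_mono
          intro x hx
          simp only [Set.mem_iUnion, Finset.mem_Icc, Set.mem_Ioo] at hx
          obtain ⟨k, ⟨hk1, hk2⟩, hx1, hx2⟩ := hx
          have hk1' : -(n:ℝ) ≤ k := by exact_mod_cast hk1
          have hk2' : (k:ℝ) ≤ (n:ℝ) - 1 := by
            have h2 : ((k:ℤ):ℝ) ≤ (((n:ℤ) - 1 : ℤ):ℝ) := Int.cast_le.2 hk2
            push_cast at h2; linarith
          refine ⟨Set.mem_iUnion.2 ⟨k, hx1, hx2⟩, ?_, ?_⟩
          · nlinarith
          · nlinarith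
  · -- upper bound
    calc volume ((⋃ k : ℤ, Set.Ioo (c * (2 * k)) (c * (2 * k + 1))) ∩ Set.Icc (-T) T)
        ≤ volume (⋃ k ∈ Finset.Icc (-(n:ℤ)-1) (n:ℤ),
            Set.Ioo (c*(2*(k:ℝ))) (c*(2*(k:ℝ)+1))) := by
          apply measure_mono
          rintro x ⟨hxS, hx1, hx2⟩
          obtain ⟨k, hk⟩ := Set.mem_iUnion.1 hxS
          obtain ⟨hxa, hxb⟩ := hk
          have hub : (2*(k:ℝ)) < 2*(n:ℝ)+2 := by nlinarith
          have hlb : -(2*(n:ℝ)+2) < 2*(k:ℝ)+1 := by nlinarith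
          have hub' : (2*k : ℤ) < 2*n+2 := by exact_mod_cast (by push_cast; linarith : ((2*k:ℤ):ℝ) < ((2*(n:ℤ)+2 : ℤ):ℝ))
          have hlb' : (-(2*(n:ℤ)+2) : ℤ) < 2*k+1 := by exact_mod_cast (by push_cast; linarith : ((-(2*(n:ℤ)+2):ℤ):ℝ) < ((2*k+1 : ℤ):ℝ))
          simp only [Set.mem_iUnion, Finset.mem_Icc, Set.mem_Ioo]
          exact ⟨k, ⟨by omega, by omega⟩, hxa, hxb⟩
      _ ≤ ∑ k ∈ Finset.Icc (-(n:ℤ)-1) (n:ℤ),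
            volume (Set.Ioo (c*(2*(k:ℝ))) (c*(2*(k:ℝ)+1))) := measure_biUnion_finset_le _ _
      _ = ((n:ℤ) + 1 - (-(n:ℤ)-1)).toNat * ENNReal.ofReal c := hsum _ _
      _ ≤ ENNReal.ofReal (T + 2*c) := by
          have hcard : ((n:ℤ) + 1 - (-(n:ℤ)-1)).toNat = 2*n+2 := by omega
          rw [hcard, ← ENNReal.ofReal_natCast (2*n+2), ← ENNReal.ofReal_mul (by positivity)]
          apply ENNReal.ofReal_le_ofReal
          push_cast
          nlinarith

lemma ratio_tendsto (c : ℝ) (hc : 0 < c) :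
    Filter.Tendsto (fun T : ℝ =>
      volume ((⋃ k : ℤ, Set.Ioo (c * (2 * k)) (c * (2 * k + 1))) ∩ Set.Icc (-T) T) /
        volume (Set.Icc (-T) T)) Filter.atTop (nhds (1/2 : ℝ≥0∞)) := by
  have hreal : ∀ d : ℝ, Filter.Tendsto (fun T : ℝ => (T + d) / (2*T)) Filter.atTop
      (nhds (1/2 : ℝ)) := by
    intro d
    have h1 : Filter.Tendsto (fun T : ℝ => 1/2 + (d/2) / T) Filter.atTop (nhds (1/2 : ℝ)) := by
      have := Filter.Tendsto.div_atTop (tendsto_const_nhds (x := d/2) (f := Filter.atTop (α := ℝ))) Filter.tendsto_id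
      simpa using tendsto_const_nhds.add this
    apply h1.congr'
    filter_upwards [Filter.eventually_gt_atTop 0] with T hT
    field_simp
  have hofhalf : ENNReal.ofReal (1/2 : ℝ) = (1/2 : ℝ≥0∞) := by
    rw [ENNReal.ofReal_div_of_pos (by norm_num)]
    norm_num
  have hcomp : ∀ d : ℝ, Filter.Tendsto (fun T : ℝ => ENNReal.ofReal ((T + d) / (2*T)))
      Filter.atTop (nhds (1/2 : ℝ≥0∞)) := by
    intro d
    rw [← hofhalf]
    exact (ENNReal.continuous_ofReal.tendsto _).comp (hreal d)
  apply tendsto_of_tendsto_of_tendsto_of_le_of_le' (hcomp (-(2*c))) (hcomp (2*c))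
  · filter_upwards [Filter.eventually_gt_atTop 0] with T hT
    have hb := (vol_bounds c hc T hT).1
    rw [Real.volume_Icc, show T - -T = 2*T by ring,
      ENNReal.ofReal_div_of_pos (by linarith)]
    exact ENNReal.div_le_div_right (by rw [show T + -(2*c) = T - 2*c by ring]; exact hb) _
  · filter_upwards [Filter.eventually_gt_atTop 0] with T hT
    have hb := (vol_bounds c hc T hT).2
    rw [Real.volume_Icc, show T - -T = 2*T by ring,
      ENNReal.ofReal_div_of_pos (by linarith)]
    exact ENNReal.div_le_div_right hb _

lemma avoid_dist (N : ℕ) :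
    ∀ x ∈ (fun x : ℝ => (3 : ℝ) ^ (-(N : ℤ)) * x) ''
        (⋃ k : ℤ, Set.Ioo (2 * (k : ℝ)) (2 * (k : ℝ) + 1)),
      ∀ y ∈ (fun x : ℝ => (3 : ℝ) ^ (-(N : ℤ)) * x) ''
        (⋃ k : ℤ, Set.Ioo (2 * (k : ℝ)) (2 * (k : ℝ) + 1)),
        ∀ j : ℕ, j ≤ N → |x - y| ≠ (3 : ℝ) ^ (-(j : ℤ)) := by
  have h30 : (3:ℝ) ≠ 0 := by norm_num
  have hc : (0:ℝ) < (3:ℝ) ^ (-(N : ℤ)) := zpow_pos (by norm_num) _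
  rintro x ⟨a, ha, rfl⟩ y ⟨b, hb, rfl⟩ j hj heq
  obtain ⟨k, hk1, hk2⟩ := Set.mem_iUnion.1 ha
  obtain ⟨l, hl1, hl2⟩ := Set.mem_iUnion.1 hb
  simp only at heq
  rw [show (3:ℝ)^(-(N:ℤ)) * a - (3:ℝ)^(-(N:ℤ)) * b = (3:ℝ)^(-(N:ℤ)) * (a - b) by ring,
    abs_mul, abs_of_pos hc] at heq
  obtain ⟨m, hmdef⟩ : ∃ m : ℕ, m = 3^(N-j) := ⟨_, rfl⟩
  have key : |a - b| = ((m : ℕ) : ℝ) := by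
    have h2 : (3:ℝ)^((N:ℤ)) * ((3:ℝ)^(-(N:ℤ)) * |a-b|) = (3:ℝ)^((N:ℤ)) * (3:ℝ)^(-(j:ℤ)) := by
      rw [heq]
    rw [← mul_assoc, ← zpow_add₀ h30, ← zpow_add₀ h30] at h2
    have h3 : |a - b| = (3:ℝ) ^ ((N:ℤ) - (j:ℤ)) := by simpa [sub_eq_add_neg] using h2
    rw [h3, hmdef]
    push_cast
    rw [← zpow_natCast]
    congr 1
    omega
  obtain ⟨t, ht⟩ : Odd m := hmdef ▸ Odd.pow ⟨1, by norm_num⟩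
  rcases (abs_eq (by positivity)).1 key with h | h
  · have h1 : ((m : ℕ) : ℝ) < 2*(k:ℝ) + 1 - 2*(l:ℝ) := by rw [← h]; linarith
    have h2 : 2*(k:ℝ) - (2*(l:ℝ) + 1) < ((m : ℕ) : ℝ) := by rw [← h]; linarith
    have h1' : ((m : ℕ) : ℤ) < 2*k + 1 - 2*l := by exact_mod_cast (by push_cast; linarith : (((m:ℕ):ℤ):ℝ) < ((2*k+1-2*l : ℤ):ℝ))
    have h2' : 2*k - (2*l+1) < ((m : ℕ) : ℤ) := by exact_mod_cast (by push_cast; linarith : ((2*k-(2*l+1) : ℤ):ℝ) < (((m:ℕ):ℤ):ℝ))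
    omega
  · have h1 : -((m : ℕ) : ℝ) < 2*(k:ℝ) + 1 - 2*(l:ℝ) := by rw [← h]; linarith
    have h2 : 2*(k:ℝ) - (2*(l:ℝ) + 1) < -((m : ℕ) : ℝ) := by rw [← h]; linarith
    have h1' : -((m : ℕ) : ℤ) < 2*k + 1 - 2*l := by exact_mod_cast (by push_cast; linarith : ((-((m:ℕ):ℤ) : ℤ):ℝ) < ((2*k+1-2*l : ℤ):ℝ))
    have h2' : 2*k - (2*l+1) < -((m : ℕ) : ℤ) := by exact_mod_cast (by push_cast; linarith : ((2*k-(2*l+1) : ℤ):ℝ) < ((-((m:ℕ):ℤ) : ℤ):ℝ))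
    omega

/-- for every `N ≥ 0`, the scaled set `3^{-N}·A`, where
`A = ⋃_{k ∈ ℤ} (2k, 2k+1)`, is measurable, has upper density `1/2`, and avoids
all distances `3^{-j}` for `0 ≤ j ≤ N`; consequently
`m_{{3^{-j} : 0 ≤ j ≤ N}}(ℝ) ≥ 1/2`. -/
theorem scaled_falconer_example (N : ℕ) :
    MeasurableSet ((fun x : ℝ => (3 : ℝ) ^ (-(N : ℤ)) * x) ''
        (⋃ k : ℤ, Set.Ioo (2 * (k : ℝ)) (2 * (k : ℝ) + 1))) ∧
      Filter.limsup
          (fun T : ℝ =>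
            volume (((fun x : ℝ => (3 : ℝ) ^ (-(N : ℤ)) * x) ''
                (⋃ k : ℤ, Set.Ioo (2 * (k : ℝ)) (2 * (k : ℝ) + 1))) ∩ Set.Icc (-T) T) /
              volume (Set.Icc (-T) T)) Filter.atTop = 1 / 2 ∧
      (∀ x ∈ (fun x : ℝ => (3 : ℝ) ^ (-(N : ℤ)) * x) ''
          (⋃ k : ℤ, Set.Ioo (2 * (k : ℝ)) (2 * (k : ℝ) + 1)),
        ∀ y ∈ (fun x : ℝ => (3 : ℝ) ^ (-(N : ℤ)) * x) ''
          (⋃ k : ℤ, Set.Ioo (2 * (k : ℝ)) (2 * (k : ℝ) + 1)),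
          ∀ j : ℕ, j ≤ N → |x - y| ≠ (3 : ℝ) ^ (-(j : ℤ))) ∧
      (1 / 2 : ℝ≥0∞) ≤
        sSup {m : ℝ≥0∞ | ∃ B : Set ℝ, MeasurableSet B ∧
          (∀ x ∈ B, ∀ y ∈ B, ∀ j : ℕ, j ≤ N → |x - y| ≠ (3 : ℝ) ^ (-(j : ℤ))) ∧
          m = Filter.limsup
            (fun T : ℝ => volume (B ∩ Set.Icc (-T) T) / volume (Set.Icc (-T) T))
            Filter.atTop} := by
  have hc : (0:ℝ) < (3:ℝ)^(-(N:ℤ)) := zpow_pos (by norm_num) _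
  have hSeq := scaled_eq ((3:ℝ)^(-(N:ℤ))) hc
  have hmeas : MeasurableSet ((fun x : ℝ => (3 : ℝ) ^ (-(N : ℤ)) * x) ''
      (⋃ k : ℤ, Set.Ioo (2 * (k : ℝ)) (2 * (k : ℝ) + 1))) := by
    rw [hSeq]; exact MeasurableSet.iUnion fun k => measurableSet_Ioo
  have hlimsup : Filter.limsup
      (fun T : ℝ =>
        volume (((fun x : ℝ => (3 : ℝ) ^ (-(N : ℤ)) * x) ''
            (⋃ k : ℤ, Set.Ioo (2 * (k : ℝ)) (2 * (k : ℝ) + 1))) ∩ Set.Icc (-T) T) /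
          volume (Set.Icc (-T) T)) Filter.atTop = 1 / 2 := by
    simp only [hSeq]
    exact (ratio_tendsto _ hc).limsup_eq
  exact ⟨hmeas, hlimsup, avoid_dist N,
    le_sSup ⟨_, hmeas, avoid_dist N, hlimsup.symm⟩⟩
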